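/- Given an (S_n)_{n≥1}-admissible tree T of finite height, there exists an S_1-admissible tree T′ with the same root such that T and T′ have the same set of leaves, and o_T(E) = o_{T′}(E) for every leaf E. -/

import Mathlib

/-- The Schreier families: `Schreier 0` consists of the singletons and `∅`;
`Schreier (n+1)` consists of all unions `G_0 ∪ … ∪ G_{k-1}` of nonempty members of
`Schreier n` with `G_0 < G_1 < … < G_{k-1}` and `k ≤ min G_0`. -/
def Schreier : ℕ → Set (Finset ℕ)
  | 0 => {F | F.card ≤ 1}
  | n + 1 => {F | ∃ (k : ℕ) (G : ℕ → Finset ℕ),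
      F = (Finset.range k).biUnion G ∧
      (∀ i < k, G i ∈ Schreier n) ∧
      (∀ i < k, (G i).Nonempty) ∧
      (∀ i j, i < j → j < k → ∀ a ∈ G i, ∀ b ∈ G j, a < b) ∧
      (∀ a ∈ G 0, k ≤ a)}

/-- The minimum of a finite set of naturals (`0` for the empty set). -/
def minN (E : Finset ℕ) : ℕ := WithTop.untopD 0 E.min

/-- Norming trees: a leaf carries a finite set; an internal node carries a finite
set, the Schreier index `n` used for its immediate successors, and the list of
subtrees rooted at those successors. -/
inductive NTree : Type
  | leaf : Finset ℕ → NTree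
  | node : Finset ℕ → ℕ → List NTree → NTree

/-- The set at the root of a norming tree. -/
def NTree.root : NTree → Finset ℕ
  | .leaf E => E
  | .node E _ _ => E

/-- A finite list of sets is `S_n`-admissible: the sets are successive
(`E < F` for earlier `E`, later `F`) and the set of their minima lies in `S_n`. -/
def AdmissibleSets (n : ℕ) (l : List (Finset ℕ)) : Prop :=
  l.Pairwise (fun E F => ∀ a ∈ E, ∀ b ∈ F, a < b) ∧
    (l.map minN).toFinset ∈ Schreier n

/-- A finite list of sets is `S_n`-allowable: the sets are pairwise disjoint and
the set of their minima lies in `S_n`. -/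
def AllowableSets (n : ℕ) (l : List (Finset ℕ)) : Prop :=
  l.Pairwise (fun E F => Disjoint E F) ∧
    (l.map minN).toFinset ∈ Schreier n

/-- `(S_n)_{n≥1}`-admissible trees: every node set is nonempty, children are
contained in their parent, and the immediate successors of each internal node
form an `S_n`-admissible collection, `n ≥ 1` being the index recorded at the node. -/
inductive ValidAdm : NTree → Prop
  | leaf (E : Finset ℕ) (hE : E.Nonempty) : ValidAdm (.leaf E)
  | node (E : Finset ℕ) (n : ℕ) (cs : List NTree) (hE : E.Nonempty) (hn : 1 ≤ n)
      (hne : cs ≠ [])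
      (hsub : ∀ c ∈ cs, NTree.root c ⊆ E)
      (hadm : AdmissibleSets n (cs.map NTree.root))
      (hval : ∀ c ∈ cs, ValidAdm c) : ValidAdm (.node E n cs)

/-- `(S_n)_{n≥1}`-allowable trees (for the modified mixed Tsirelson norm). -/
inductive ValidAllow : NTree → Prop
  | leaf (E : Finset ℕ) (hE : E.Nonempty) : ValidAllow (.leaf E)
  | node (E : Finset ℕ) (n : ℕ) (cs : List NTree) (hE : E.Nonempty) (hn : 1 ≤ n)
      (hne : cs ≠ [])
      (hsub : ∀ c ∈ cs, NTree.root c ⊆ E)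
      (hadm : AllowableSets n (cs.map NTree.root))
      (hval : ∀ c ∈ cs, ValidAllow c) : ValidAllow (.node E n cs)

/-- `S_N`-admissible trees: every branching uses the fixed Schreier index `N`. -/
inductive ValidAdmN (N : ℕ) : NTree → Prop
  | leaf (E : Finset ℕ) (hE : E.Nonempty) : ValidAdmN N (.leaf E)
  | node (E : Finset ℕ) (cs : List NTree) (hE : E.Nonempty)
      (hne : cs ≠ [])
      (hsub : ∀ c ∈ cs, NTree.root c ⊆ E)
      (hadm : AdmissibleSets N (cs.map NTree.root))
      (hval : ∀ c ∈ cs, ValidAdmN N c) : ValidAdmN N (.node E N cs)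

/-- `IsNodeAt T d F`: `F` is a node of the tree `T` whose order `o(F)`—the sum of
the Schreier indices along the branch from the root to `F`—equals `d`. -/
inductive IsNodeAt : NTree → ℕ → Finset ℕ → Prop
  | root (T : NTree) : IsNodeAt T 0 T.root
  | child (E : Finset ℕ) (n : ℕ) (cs : List NTree) (c : NTree) (d : ℕ) (F : Finset ℕ)
      (hc : c ∈ cs) (h : IsNodeAt c d F) : IsNodeAt (.node E n cs) (n + d) F

/-- `IsLeafAt T d F`: `F` is a leaf of the tree `T` of order `o(F) = d`. -/
inductive IsLeafAt : NTree → ℕ → Finset ℕ → Prop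
  | leaf (E : Finset ℕ) : IsLeafAt (.leaf E) 0 E
  | child (E : Finset ℕ) (n : ℕ) (cs : List NTree) (c : NTree) (d : ℕ) (F : Finset ℕ)
      (hc : c ∈ cs) (h : IsLeafAt c d F) : IsLeafAt (.node E n cs) (n + d) F

lemma minN_eq_min' {E : Finset ℕ} (hE : E.Nonempty) : minN E = E.min' hE := by
  rw [minN, ← Finset.coe_min' hE]; rfl

lemma minN_mem {E : Finset ℕ} (hE : E.Nonempty) : minN E ∈ E := by
  rw [minN_eq_min' hE]; exact E.min'_mem hE

lemma minN_le {E : Finset ℕ} {a : ℕ} (ha : a ∈ E) : minN E ≤ a := by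
  rw [minN_eq_min' ⟨a, ha⟩]; exact Finset.min'_le _ _ ha

lemma minN_eq_of (E : Finset ℕ) (a : ℕ) (ha : a ∈ E) (h : ∀ b ∈ E, a ≤ b) :
    minN E = a :=
  le_antisymm (minN_le ha) (h _ (minN_mem ⟨a, ha⟩))

/-- A nonempty set whose cardinality is at most its minimum is in `Schreier 1`. -/
lemma schreier_one_of_card_le (F : Finset ℕ) (hF : F.Nonempty) (h : F.card ≤ minN F) :
    F ∈ Schreier 1 := by
  classical
  set s : List ℕ := F.sort (· ≤ ·) with hs
  have hlen : s.length = F.card := F.length_sort _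
  have hpos : 0 < s.length := by rw [hlen]; exact Finset.card_pos.2 hF
  refine ⟨F.card, fun i => {s.getD i 0}, ?_, ?_, ?_, ?_, ?_⟩
  · ext a
    simp only [Finset.mem_biUnion, Finset.mem_range, Finset.mem_singleton]
    constructor
    · intro ha
      have : a ∈ s := by rw [hs]; simpa [Finset.mem_sort] using ha
      obtain ⟨i, hi, hget⟩ := List.getElem_of_mem this
      exact ⟨i, by omega, by rw [List.getD_eq_getElem _ _ (by omega)]; exact hget.symm⟩
    · rintro ⟨i, hi, rfl⟩
      rw [List.getD_eq_getElem _ _ (by omega)]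
      exact (Finset.mem_sort _).1 (List.getElem_mem _)
  · intro i _; simp [Schreier]
  · intro i _; simp
  · intro i j hij hj a ha b hb
    simp only [Finset.mem_singleton] at ha hb
    subst ha; subst hb
    rw [List.getD_eq_getElem _ _ (by omega), List.getD_eq_getElem _ _ (by omega)]
    exact (F.sortedLT_sort).getElem_lt_getElem_of_lt hij
  · intro a ha
    simp only [Finset.mem_singleton] at ha
    subst ha
    rw [List.getD_eq_getElem _ _ (by omega)]
    have h0 : s[0] = F.min' hF := by
      have := Finset.sorted_zero_eq_min' (s := F) (h := by rw [← hs]; exact hpos)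
      simpa using this
    rw [h0, ← minN_eq_min' hF]
    exact h

def unionList (L : List (Finset ℕ)) : Finset ℕ := L.foldr (· ∪ ·) ∅

lemma mem_unionList {L : List (Finset ℕ)} {a : ℕ} :
    a ∈ unionList L ↔ ∃ E ∈ L, a ∈ E := by
  induction L with
  | nil => simp [unionList]
  | cons E t ih => simp [unionList, List.foldr] at ih ⊢; rw [ih]

lemma unionList_nonempty {L : List (Finset ℕ)} (hL : L ≠ [])
    (h : ∀ E ∈ L, E.Nonempty) : (unionList L).Nonempty := by
  obtain ⟨E, t, rfl⟩ := List.exists_cons_of_ne_nil hL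
  obtain ⟨a, ha⟩ := h E (by simp)
  exact ⟨a, mem_unionList.2 ⟨E, by simp, ha⟩⟩

lemma minN_unionList {L : List (Finset ℕ)} (hL : L ≠ []) (h : ∀ E ∈ L, E.Nonempty) :
    minN (unionList L) = minN ((L.map minN).toFinset) := by
  have hne : (unionList L).Nonempty := unionList_nonempty hL h
  obtain ⟨E0, t, hL0⟩ := List.exists_cons_of_ne_nil hL
  have hS : ((L.map minN).toFinset).Nonempty := ⟨minN E0, by subst hL0; simp⟩
  refine le_antisymm ?_ ?_
  · have := minN_mem hS
    rw [List.mem_toFinset, List.mem_map] at this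
    obtain ⟨E, hE, hEeq⟩ := this
    rw [← hEeq]
    exact minN_le (mem_unionList.2 ⟨E, hE, minN_mem (h E hE)⟩)
  · have := minN_mem hne
    rw [mem_unionList] at this
    obtain ⟨E, hE, hEmem⟩ := this
    calc minN ((L.map minN).toFinset) ≤ minN E :=
          minN_le (by rw [List.mem_toFinset, List.mem_map]; exact ⟨E, hE, rfl⟩)
      _ ≤ minN (unionList L) := minN_le hEmem

lemma exists_forall₂ {α β : Type*} {P : α → β → Prop} :
    ∀ l : List α, (∀ a ∈ l, ∃ b, P a b) → ∃ l' : List β, List.Forall₂ P l l' := by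
  intro l
  induction l with
  | nil => exact fun _ => ⟨[], List.Forall₂.nil⟩
  | cons a t ih =>
    intro h
    obtain ⟨b, hb⟩ := h a (by simp)
    obtain ⟨t', ht'⟩ := ih (fun x hx => h x (by simp [hx]))
    exact ⟨b :: t', List.Forall₂.cons hb ht'⟩

/-- The partition lemma: a list whose minima set decomposes as an increasing
union `⋃ i < k, G i` splits into consecutive blocks with minima sets `G i`. -/
lemma lemP {α : Type*} (r : α → Finset ℕ) :
    ∀ (k : ℕ) (G : ℕ → Finset ℕ) (l : List α),
    (∀ x ∈ l, (r x).Nonempty) →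
    (l.map r).Pairwise (fun E F => ∀ a ∈ E, ∀ b ∈ F, a < b) →
    ((l.map fun x => minN (r x))).toFinset = (Finset.range k).biUnion G →
    (∀ i < k, (G i).Nonempty) →
    (∀ i j, i < j → j < k → ∀ a ∈ G i, ∀ b ∈ G j, a < b) →
    ∃ bs : List (List α), bs.flatten = l ∧ (∀ b ∈ bs, b ≠ []) ∧
      bs.map (fun b => (b.map fun x => minN (r x)).toFinset) = (List.range k).map G := by
  intro k
  induction k with
  | zero =>
    intro G l _ _ hF _ _
    have : l = [] := by
      cases l with
      | nil => rfl
      | cons x t =>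
        exfalso
        have : minN (r x) ∈ (Finset.range 0).biUnion G := by
          rw [← hF]; simp
        simpa using this
    exact ⟨[], by simp [this]⟩
  | succ k ih =>
    intro G l hne hpw hF hGne hGlt
    classical
    set p : α → Bool := fun x => decide (minN (r x) ∈ G 0) with hp
    set l₁ := l.takeWhile p with hl₁
    set l₂ := l.dropWhile p with hl₂
    have happ : l₁ ++ l₂ = l := List.takeWhile_append_dropWhile
    -- membership of minima in F
    have hmemF : ∀ x ∈ l, minN (r x) ∈ (Finset.range (k+1)).biUnion G := by
      intro x hx
      rw [← hF, List.mem_toFinset, List.mem_map]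
      exact ⟨x, hx, rfl⟩
    -- x ∈ l₂ → minN (r x) ∉ G 0
    have hnotin : ∀ x ∈ l₂, minN (r x) ∉ G 0 := by
      intro x hx hmem
      cases hl2e : l₂ with
      | nil => rw [hl2e] at hx; simp at hx
      | cons y t =>
        have hy : ¬ (p y = true) := by
          have := List.head?_dropWhile_not p l
          rw [← hl₂, hl2e] at this
          simpa using this
        rw [hp] at hy; simp only [decide_eq_true_eq] at hy
        have hyl : y ∈ l := by rw [← happ, hl2e]; simp
        have hymem := hmemF y hyl
        rw [Finset.mem_biUnion] at hymem
        obtain ⟨j, hj, hyG⟩ := hymem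
        rw [Finset.mem_range] at hj
        have hj0 : 0 < j := by
          rcases Nat.eq_zero_or_pos j with h0 | h0
          · exact absurd (h0 ▸ hyG) hy
          · exact h0
        -- minN (r x) ∈ G 0 < minN (r y)
        have hlt1 : minN (r x) < minN (r y) := hGlt 0 j hj0 hj _ hmem _ hyG
        rw [hl2e] at hx
        rcases List.mem_cons.1 hx with rfl | hx
        · exact absurd hmem hy
        · -- y comes before x in l₂ hence in l
          have hsub : l₂.Sublist l := by rw [← happ]; exact List.sublist_append_right _ _
          have hpw₂ : (l₂.map r).Pairwise (fun E F => ∀ a ∈ E, ∀ b ∈ F, a < b) :=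
            hpw.sublist (hsub.map r)
          rw [hl2e] at hpw₂
          simp only [List.map_cons, List.pairwise_cons] at hpw₂
          have := hpw₂.1 (r x) (List.mem_map_of_mem hx) _ (minN_mem (hne y hyl)) _
            (minN_mem (hne x (by rw [← happ, hl2e]; simp [hx])))
          omega
    -- x ∈ l₁ → minN (r x) ∈ G 0
    have hin : ∀ x ∈ l₁, minN (r x) ∈ G 0 := by
      intro x hx
      have := List.mem_takeWhile_imp (hl₁ ▸ hx)
      rw [hp] at this; simpa using this
    -- minima of l₁ = G 0
    have hl₁min : ((l₁.map fun x => minN (r x))).toFinset = G 0 := by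
      ext a
      rw [List.mem_toFinset, List.mem_map]
      constructor
      · rintro ⟨x, hx, rfl⟩; exact hin x hx
      · intro ha
        have : a ∈ (Finset.range (k+1)).biUnion G :=
          Finset.mem_biUnion.2 ⟨0, by simp, ha⟩
        rw [← hF, List.mem_toFinset, List.mem_map] at this
        obtain ⟨x, hx, rfl⟩ := this
        rw [← happ, List.mem_append] at hx
        rcases hx with hx | hx
        · exact ⟨x, hx, rfl⟩
        · exact absurd ha (hnotin x hx)
    have hl₁ne : l₁ ≠ [] := by
      obtain ⟨a, ha⟩ := hGne 0 (by omega)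
      rw [← hl₁min, List.mem_toFinset, List.mem_map] at ha
      obtain ⟨x, hx, _⟩ := ha
      exact List.ne_nil_of_mem hx
    -- minima of l₂ = ⋃_{i<k} G (i+1)
    have hl₂min : ((l₂.map fun x => minN (r x))).toFinset
        = (Finset.range k).biUnion (fun i => G (i+1)) := by
      ext a
      rw [List.mem_toFinset, List.mem_map, Finset.mem_biUnion]
      constructor
      · rintro ⟨x, hx, rfl⟩
        have := hmemF x (by rw [← happ]; simp [hx])
        rw [Finset.mem_biUnion] at this
        obtain ⟨j, hj, hG⟩ := this
        rw [Finset.mem_range] at hj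
        have hj0 : 0 < j := by
          rcases Nat.eq_zero_or_pos j with h0 | h0
          · exact absurd (h0 ▸ hG) (hnotin x hx)
          · exact h0
        exact ⟨j - 1, by simp; omega, by rwa [Nat.sub_add_cancel hj0]⟩
      · rintro ⟨i, hi, hG⟩
        rw [Finset.mem_range] at hi
        have : a ∈ (Finset.range (k+1)).biUnion G :=
          Finset.mem_biUnion.2 ⟨i+1, by simp; omega, hG⟩
        rw [← hF, List.mem_toFinset, List.mem_map] at this
        obtain ⟨x, hx, rfl⟩ := this
        rw [← happ, List.mem_append] at hx
        rcases hx with hx | hx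
        · exfalso
          have h0 := hin x hx
          exact absurd (hGlt 0 (i+1) (by omega) (by omega) _ h0 _ hG) (by simp)
        · exact ⟨x, hx, rfl⟩
    have hsub₂ : l₂.Sublist l := by rw [← happ]; exact List.sublist_append_right _ _
    obtain ⟨bs₂, hbs₂join, hbs₂ne, hbs₂map⟩ := ih (fun i => G (i+1)) l₂
      (fun x hx => hne x (hsub₂.mem hx))
      (hpw.sublist (hsub₂.map r)) hl₂min
      (fun i hi => hGne (i+1) (by omega))
      (fun i j hij hj => hGlt (i+1) (j+1) (by omega) (by omega))
    refine ⟨l₁ :: bs₂, by simp [hbs₂join, happ], ?_, ?_⟩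
    · intro b hb
      rcases List.mem_cons.1 hb with rfl | hb
      · exact hl₁ne
      · exact hbs₂ne b hb
    · rw [List.range_succ_eq_map]
      simp only [List.map_cons, List.map_map]
      rw [hl₁min, hbs₂map]
      rfl
lemma root_nonempty {T : NTree} (h : ValidAdmN 1 T) : T.root.Nonempty := by
  cases h <;> assumption

lemma isLeafAt_node_iff {E : Finset ℕ} {n : ℕ} {cs : List NTree} {d : ℕ} {F : Finset ℕ} :
    IsLeafAt (.node E n cs) d F ↔ ∃ c ∈ cs, ∃ e, d = n + e ∧ IsLeafAt c e F := by
  constructor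
  · intro h
    cases h with
    | child _ _ _ c e _ hc h => exact ⟨c, hc, e, rfl, h⟩
  · rintro ⟨c, hc, e, rfl, h⟩
    exact .child E n cs c e F hc h

lemma forall₂_map_eq {α β γ : Type*} {P : α → β → Prop} {f : α → γ} {g : β → γ}
    (h : ∀ a b, P a b → f a = g b) :
    ∀ {l : List α} {l' : List β}, List.Forall₂ P l l' → l.map f = l'.map g := by
  intro l l' h2
  induction h2 with
  | nil => simp
  | cons hab _ ih => simp [h _ _ hab, ih]

lemma mem_right_of_forall₂ {α β : Type*} {P : α → β → Prop} {b : β} :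
    ∀ {l : List α} {l' : List β}, List.Forall₂ P l l' → b ∈ l' → ∃ a ∈ l, P a b := by
  intro l l' h2
  induction h2 with
  | nil => simp
  | cons hab _ ih =>
    intro hb
    rcases List.mem_cons.1 hb with rfl | hb
    · exact ⟨_, by simp, hab⟩
    · obtain ⟨a, ha, hP⟩ := ih hb
      exact ⟨a, by simp [ha], hP⟩

lemma mem_left_of_forall₂ {α β : Type*} {P : α → β → Prop} {a : α} :
    ∀ {l : List α} {l' : List β}, List.Forall₂ P l l' → a ∈ l → ∃ b ∈ l', P a b := by
  intro l l' h2
  induction h2 with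
  | nil => simp
  | cons hab _ ih =>
    intro ha
    rcases List.mem_cons.1 ha with rfl | ha
    · exact ⟨_, by simp, hab⟩
    · obtain ⟨b, hb, hP⟩ := ih ha
      exact ⟨b, by simp [hb], hP⟩

lemma lemB : ∀ n, 1 ≤ n → ∀ (E : Finset ℕ) (cs : List NTree),
    E.Nonempty → cs ≠ [] → (∀ c ∈ cs, ValidAdmN 1 c) → (∀ c ∈ cs, c.root ⊆ E) →
    AdmissibleSets n (cs.map NTree.root) →
    ∃ T' : NTree, ValidAdmN 1 T' ∧ T'.root = E ∧
      ∀ F d, IsLeafAt T' d F ↔ ∃ c ∈ cs, ∃ e, d = n + e ∧ IsLeafAt c e F := by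
  intro n hn
  induction n, hn using Nat.le_induction with
  | base =>
    intro E cs hE hne hval hsub hadm
    refine ⟨.node E 1 cs, ValidAdmN.node E cs hE hne hsub hadm hval, rfl, ?_⟩
    intro F d
    exact isLeafAt_node_iff
  | succ n hn ih =>
    intro E cs hE hcne hval hsub hadm
    classical
    obtain ⟨hpw, hSch⟩ := hadm
    simp only [Schreier, Set.mem_setOf_eq] at hSch
    obtain ⟨k, G, hF, hGS, hGne, hGlt, hGmin⟩ := hSch
    have hrne : ∀ c ∈ cs, (NTree.root c).Nonempty := fun c hc => root_nonempty (hval c hc)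
    obtain ⟨bs, hjoin, hbne, hmap⟩ := lemP NTree.root k G cs hrne hpw
      (by rw [← hF, List.map_map]; rfl) hGne hGlt
    have hlen : bs.length = k := by
      have := congrArg List.length hmap
      simpa using this
    have hbsne : bs ≠ [] := by
      intro h; rw [h] at hjoin; exact hcne hjoin.symm
    have hk1 : 1 ≤ k := by
      rw [← hlen]; exact List.length_pos_iff.2 hbsne
    -- each block gives a tree by the inductive hypothesis
    have hex : ∀ b ∈ bs, ∃ t : NTree, ValidAdmN 1 t ∧
        t.root = unionList (b.map NTree.root) ∧
        ∀ F d, IsLeafAt t d F ↔ ∃ c ∈ b, ∃ e, d = n + e ∧ IsLeafAt c e F := by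
      intro b hb
      have hbsubcs : ∀ c ∈ b, c ∈ cs := by
        intro c hc; rw [← hjoin]; exact List.mem_flatten.2 ⟨b, hb, hc⟩
      have hbne' : b ≠ [] := hbne b hb
      have hmapne : b.map NTree.root ≠ [] := by simpa using hbne'
      have hrne' : ∀ X ∈ b.map NTree.root, X.Nonempty := by
        intro X hX; rw [List.mem_map] at hX; obtain ⟨c, hc, rfl⟩ := hX
        exact hrne c (hbsubcs c hc)
      refine ih (unionList (b.map NTree.root)) b
        (unionList_nonempty hmapne hrne') hbne'
        (fun c hc => hval c (hbsubcs c hc))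
        (fun c hc a ha => mem_unionList.2 ⟨c.root, List.mem_map_of_mem hc, ha⟩)
        ⟨hpw.sublist ((List.sublist_flatten_of_mem hb).map NTree.root |>.trans
            (by rw [hjoin])), ?_⟩
      -- minima set of the block is some G i
      have : (b.map fun c => minN c.root).toFinset ∈
          bs.map (fun b => (b.map fun c => minN c.root).toFinset) :=
        List.mem_map_of_mem hb
      rw [hmap, List.mem_map] at this
      obtain ⟨i, hi, hGi⟩ := this
      rw [List.mem_range] at hi
      rw [List.map_map]
      show ((b.map fun c => minN c.root)).toFinset ∈ Schreier n
      rw [← hGi]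
      exact hGS i hi
    obtain ⟨ts, hts⟩ := exists_forall₂ bs hex
    have htsroot : bs.map (fun b => unionList (b.map NTree.root)) = ts.map NTree.root :=
      forall₂_map_eq (fun b t ht => ht.2.1.symm) hts
    have htsne : ts ≠ [] := by
      intro h
      have := hts.length_eq
      rw [h] at this
      exact hbsne (List.length_eq_zero_iff.1 (by simpa using this))
    -- admissibility of the new level
    have hminN : ∀ b ∈ bs, minN (unionList (b.map NTree.root)) =
        minN ((b.map fun c => minN c.root).toFinset) := by
      intro b hb
      have hbsubcs : ∀ c ∈ b, c ∈ cs := by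
        intro c hc; rw [← hjoin]; exact List.mem_flatten.2 ⟨b, hb, hc⟩
      rw [minN_unionList (by simpa using hbne b hb)
        (by intro X hX; rw [List.mem_map] at hX; obtain ⟨c, hc, rfl⟩ := hX
            exact hrne c (hbsubcs c hc)), List.map_map]
      rfl
    have hmins : (ts.map NTree.root).map minN = ((List.range k).map G).map minN := by
      rw [← htsroot, List.map_map, ← hmap, List.map_map]
      exact List.map_congr_left (fun b hb => hminN b hb)
    have hcross : bs.Pairwise (fun b₁ b₂ => ∀ X ∈ b₁.map NTree.root,
        ∀ Y ∈ b₂.map NTree.root, ∀ a ∈ X, ∀ b ∈ Y, a < b) := by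
      have h1 : ((bs.map (List.map NTree.root)).flatten).Pairwise
          (fun E F => ∀ a ∈ E, ∀ b ∈ F, a < b) := by
        rw [← List.map_flatten, hjoin]; exact hpw
      exact List.pairwise_map.1 (List.pairwise_flatten.1 h1).2
    have hpw' : (ts.map NTree.root).Pairwise (fun E F => ∀ a ∈ E, ∀ b ∈ F, a < b) := by
      rw [← htsroot, List.pairwise_map]
      refine hcross.imp ?_
      intro b₁ b₂ h a ha b hb
      obtain ⟨X, hX, haX⟩ := mem_unionList.1 ha
      obtain ⟨Y, hY, hbY⟩ := mem_unionList.1 hb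
      exact h X hX Y hY a haX b hbY
    have hS : ((ts.map NTree.root).map minN).toFinset ∈ Schreier 1 := by
      rw [hmins]
      set S := ((((List.range k).map G)).map minN).toFinset with hSdef
      have hm0 : minN (G 0) ∈ S :=
        List.mem_toFinset.2 (List.mem_map.2 ⟨G 0,
          List.mem_map.2 ⟨0, List.mem_range.2 (by omega), rfl⟩, rfl⟩)
      have hminS : minN S = minN (G 0) := by
        refine minN_eq_of S _ hm0 ?_
        intro s hs
        rw [hSdef, List.mem_toFinset, List.mem_map] at hs
        obtain ⟨X, hX, rfl⟩ := hs
        rw [List.mem_map] at hX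
        obtain ⟨i, hi, rfl⟩ := hX
        rw [List.mem_range] at hi
        rcases Nat.eq_zero_or_pos i with rfl | hi0
        · exact le_refl _
        · exact le_of_lt (hGlt 0 i hi0 hi _ (minN_mem (hGne 0 (by omega))) _
            (minN_mem (hGne i hi)))
      refine schreier_one_of_card_le S ⟨_, hm0⟩ ?_
      rw [hminS]
      calc S.card ≤ (((List.range k).map G).map minN).length := List.toFinset_card_le _
        _ = k := by simp
        _ ≤ minN (G 0) := hGmin _ (minN_mem (hGne 0 (by omega)))
    have hsub' : ∀ t ∈ ts, NTree.root t ⊆ E := by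
      intro t ht
      obtain ⟨b, hb, hQ⟩ := mem_right_of_forall₂ hts ht
      rw [hQ.2.1]
      intro a ha
      obtain ⟨X, hX, haX⟩ := mem_unionList.1 ha
      rw [List.mem_map] at hX
      obtain ⟨c, hc, rfl⟩ := hX
      exact hsub c (by rw [← hjoin]; exact List.mem_flatten.2 ⟨b, hb, hc⟩) haX
    have hval' : ∀ t ∈ ts, ValidAdmN 1 t := by
      intro t ht
      obtain ⟨b, hb, hQ⟩ := mem_right_of_forall₂ hts ht
      exact hQ.1
    refine ⟨.node E 1 ts, ValidAdmN.node E ts hE htsne hsub' ⟨hpw', hS⟩ hval', rfl, ?_⟩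
    intro F d
    rw [isLeafAt_node_iff]
    constructor
    · rintro ⟨t, ht, e, rfl, hl⟩
      obtain ⟨b, hb, hQ⟩ := mem_right_of_forall₂ hts ht
      rw [hQ.2.2] at hl
      obtain ⟨c, hc, e', rfl, hl⟩ := hl
      exact ⟨c, by rw [← hjoin]; exact List.mem_flatten.2 ⟨b, hb, hc⟩, e', by omega, hl⟩
    · rintro ⟨c, hc, e, rfl, hl⟩
      rw [← hjoin, List.mem_flatten] at hc
      obtain ⟨b, hb, hcb⟩ := hc
      obtain ⟨t, ht, hQ⟩ := mem_left_of_forall₂ hts hb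
      exact ⟨t, ht, n + e, by omega, (hQ.2.2 F (n + e)).2 ⟨c, hcb, e, rfl, hl⟩⟩

lemma size_lt {c : NTree} {cs : List NTree} (hc : c ∈ cs) (E : Finset ℕ) (n : ℕ) :
    sizeOf c < sizeOf (NTree.node E n cs) := by
  have := List.sizeOf_lt_of_mem hc
  simp only [NTree.node.sizeOf_spec]
  omega

lemma size_pos (T : NTree) : 1 ≤ sizeOf T := by
  cases T <;> simp <;> omega

/-- Given an `(S_n)_{n≥1}`-admissible tree `T`, there exists an
`S_1`-admissible tree `T'` with the same root and the same set of leaves, with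
`o_T(E) = o_{T'}(E)` for every leaf `E`. -/
theorem stmt16 (T : NTree) (hT : ValidAdm T) :
    ∃ T' : NTree, ValidAdmN 1 T' ∧ T'.root = T.root ∧
      (∀ E : Finset ℕ, (∃ d, IsLeafAt T d E) ↔ (∃ d, IsLeafAt T' d E)) ∧
      (∀ E d, IsLeafAt T d E → IsLeafAt T' d E) := by
  suffices H : ∀ (N : ℕ) (T : NTree), sizeOf T ≤ N → ValidAdm T →
      ∃ T' : NTree, ValidAdmN 1 T' ∧ T'.root = T.root ∧
        ∀ F d, IsLeafAt T d F ↔ IsLeafAt T' d F by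
    obtain ⟨T', h1, h2, h3⟩ := H (sizeOf T) T le_rfl hT
    exact ⟨T', h1, h2,
      fun E => ⟨fun ⟨d, h⟩ => ⟨d, (h3 E d).1 h⟩, fun ⟨d, h⟩ => ⟨d, (h3 E d).2 h⟩⟩,
      fun E d h => (h3 E d).1 h⟩
  intro N
  induction N with
  | zero =>
    intro T h
    have := size_pos T
    omega
  | succ N ihN =>
    intro T hsz hT
    cases hT with
    | leaf E hE => exact ⟨.leaf E, .leaf E hE, rfl, fun F d => Iff.rfl⟩
    | node E n cs hE hn hne hsubc hadm hval =>
      have hex : ∀ c ∈ cs, ∃ t : NTree, ValidAdmN 1 t ∧ t.root = c.root ∧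
          ∀ F d, IsLeafAt c d F ↔ IsLeafAt t d F := by
        intro c hc
        have := size_lt hc E n
        exact ihN c (by omega) (hval c hc)
      obtain ⟨ts, hts⟩ := exists_forall₂ cs hex
      have hroots : cs.map NTree.root = ts.map NTree.root :=
        forall₂_map_eq (fun c t h => h.2.1.symm) hts
      have htsne : ts ≠ [] := by
        intro h
        have := hts.length_eq
        rw [h] at this
        exact hne (List.length_eq_zero_iff.1 (by simpa using this))
      obtain ⟨T', hv, hroot, hiff⟩ := lemB n hn E ts hE htsne
        (fun t ht => (mem_right_of_forall₂ hts ht).choose_spec.2.1)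
        (fun t ht => by
          obtain ⟨c, hc, hQ⟩ := mem_right_of_forall₂ hts ht
          rw [hQ.2.1]; exact hsubc c hc)
        (by rw [← hroots]; exact hadm)
      refine ⟨T', hv, by rw [hroot]; rfl, ?_⟩
      intro F d
      rw [isLeafAt_node_iff, hiff F d]
      constructor
      · rintro ⟨c, hc, e, rfl, h⟩
        obtain ⟨t, ht, hQ⟩ := mem_left_of_forall₂ hts hc
        exact ⟨t, ht, e, rfl, (hQ.2.2 F e).1 h⟩
      · rintro ⟨t, ht, e, rfl, h⟩
        obtain ⟨c, hc, hQ⟩ := mem_right_of_forall₂ hts ht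
        exact ⟨c, hc, e, rfl, (hQ.2.2 F e).2 h⟩
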